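/- Let a, r1, r2, r3 be real numbers with a > 0 and r1 < r2 < r3, and let Q : ℝ → ℝ be a differentiable function whose derivative is Q'(x) = 4a(x − r1)(x − r2)(x − r3) for all x. If 2r2 − r1 − r3 > 0, then r1 is the unique global minimizer of Q, i.e., Q(r1) < Q(x) for all x ≠ r1. -/

import Mathlib

/-- If `2r₂ − r₁ − r₃ > 0`, then `r₁` is the unique global
minimizer of `Q`. -/
theorem stmt_3 (a r₁ r₂ r₃ : ℝ) (ha : 0 < a) (h₁₂ : r₁ < r₂) (h₂₃ : r₂ < r₃)
    (Q : ℝ → ℝ) (hQ : Differentiable ℝ Q)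
    (hQ' : ∀ x : ℝ, deriv Q x = 4 * a * (x - r₁) * (x - r₂) * (x - r₃))
    (h : 2 * r₂ - r₁ - r₃ > 0) :
    ∀ x : ℝ, x ≠ r₁ → Q r₁ < Q x := by
  set p : ℝ := (2*r₁ - 4*r₂ - 4*r₃)/3 with hp
  set q : ℝ := 2*r₂*r₃ + (r₁^2 - 2*r₁*r₂ - 2*r₁*r₃)/3 with hq
  set P : ℝ → ℝ := fun x => a*(x - r₁)^2*(x^2 + p*x + q) with hP
  have hPd : ∀ x : ℝ, HasDerivAt P (4 * a * (x - r₁) * (x - r₂) * (x - r₃)) x := by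
    intro x
    have h2 : HasDerivAt (fun x : ℝ => x^2 + p*x + q)
        ((2:ℕ) * x ^ (2-1) + p * 1) x :=
      ((hasDerivAt_pow 2 x).add ((hasDerivAt_id x).const_mul p)).add_const q
    have h1 : HasDerivAt (fun x : ℝ => (x - r₁)^2)
        ((2:ℕ) * (x - r₁) ^ (2-1) * 1) x :=
      ((hasDerivAt_id x).sub_const r₁).pow 2
    have h3 : HasDerivAt (fun y => a * (y - r₁) ^ 2 * (y ^ 2 + p * y + q)) _ x :=
      (h1.const_mul a).mul h2
    convert h3 using 1
    simp only [hp, hq]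
    push_cast
    field_simp
    ring
  have hconst : ∀ x : ℝ, Q x - P x = Q r₁ - P r₁ := by
    have hd : Differentiable ℝ (fun x => Q x - P x) :=
      hQ.sub (fun x => (hPd x).differentiableAt)
    have hz : ∀ x, deriv (fun x => Q x - P x) x = 0 := by
      intro x
      have := ((hQ x).hasDerivAt.sub (hPd x)).deriv
      change deriv (Q - P) x = 0
      rw [this, hQ' x]; ring
    exact fun x => is_const_of_deriv_eq_zero hd hz x r₁
  intro x hx
  have hPr : P r₁ = 0 := by simp [hP]
  have hQx : Q x - Q r₁ = P x := by
    have h4 := hconst x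
    rw [hPr] at h4
    linarith
  have hsq : 0 < (x - r₁)^2 := by
    have : x - r₁ ≠ 0 := sub_ne_zero.mpr hx
    positivity
  have hquad : 0 < x^2 + p*x + q := by
    have h5 : (0:ℝ) < 2*r₃ - r₁ - r₂ := by linarith
    simp only [hp, hq]
    nlinarith [sq_nonneg (3*x + r₁ - 2*r₂ - 2*r₃), mul_pos h h5]
  have hPpos : 0 < P x := by
    rw [hP]
    exact mul_pos (mul_pos ha hsq) hquad
  linarith
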